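/- Let f : ℝ → EReal be k-convex with speedp(f*) > −∞, let C ⊆ ℝ be a convex set with ψ̄ = sup C satisfying 0 < ψ̄ < +∞, and let χ = χ_C. Assume Φ(nat f) ∩ C ≠ ∅ and nat f is right-continuous at ψ̄. Then nat(nat f + χ)(θ) = (nat f + χ)(θ) for every θ < ψ̄, and nat(nat f + χ)(θ) = θ·(nat f(ψ̄)/ψ̄) for every θ ≥ ψ̄. -/

import Mathlib

open Set Filter Topology

noncomputable section

/-- `f : ℝ → EReal` is convex iff its epigraph is a convex set. -/
def EConvex (f : ℝ → EReal) : Prop :=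
  Convex ℝ {p : ℝ × ℝ | f p.1 ≤ (p.2 : EReal)}

/-- The Fenchel dual `f*(a) = sup_θ (θ·a − f(θ))`. -/
def Fd (f : ℝ → EReal) : ℝ → EReal :=
  fun a => ⨆ θ : ℝ, ((θ * a : ℝ) : EReal) - f θ

/-- The sweep `f°`: strictly positive values are swept to `+∞`. -/
def sweep (f : ℝ → EReal) : ℝ → EReal :=
  fun a => if f a ≤ 0 then f a else ⊤

/-- `speedp f = inf {a | f a > 0}`, as an extended real. -/
def speedp (f : ℝ → EReal) : EReal :=
  sInf ((fun a : ℝ => (a : EReal)) '' {a : ℝ | 0 < f a})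

/-- k-convex functions. -/
def KConvex (f : ℝ → EReal) : Prop :=
  EConvex f ∧ (∃ θ : ℝ, 0 < θ ∧ f θ < ⊤) ∧ (∀ θ : ℝ, θ < 0 → f θ = ⊤)

/-- The closure `cl f`: the greatest lower semicontinuous function beneath `f`. -/
def ecl (f : ℝ → EReal) : ℝ → EReal :=
  fun x => ⨆ g : {g : ℝ → EReal // LowerSemicontinuous g ∧ ∀ y, g y ≤ f y}, g.1 x

/-- r-functions: increasing, convex, somewhere in `(−∞,0)`, left continuous,
and `+∞` whenever strictly positive. -/
def RFunction (r : ℝ → EReal) : Prop :=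
  Monotone r ∧ EConvex r ∧ (∃ a : ℝ, ⊥ < r a ∧ r a < 0) ∧
    (∀ a : ℝ, ContinuousWithinAt r (Set.Iio a) a) ∧
    (∀ a : ℝ, 0 < r a → r a = ⊤)

/-- The greatest lower semicontinuous convex function beneath `f` and `g`. -/
def cv (f g : ℝ → EReal) : ℝ → EReal :=
  fun x => ⨆ h : {h : ℝ → EReal //
    LowerSemicontinuous h ∧ EConvex h ∧ (∀ y, h y ≤ f y) ∧ (∀ y, h y ≤ g y)}, h.1 x

/-- `enat f`: the pointwise sup of convex minorants `g` of `f` with `g θ / θ`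
antitone on `(0,∞)`. -/
def enat (f : ℝ → EReal) : ℝ → EReal :=
  fun x => ⨆ g : {g : ℝ → EReal // EConvex g ∧ (∀ y, g y ≤ f y) ∧
      AntitoneOn (fun θ : ℝ => g θ * ((θ⁻¹ : ℝ) : EReal)) (Set.Ioi 0)}, g.1 x

/-- `varthetapp f = sup {θ | f θ = enat f θ}`. -/
def varthetapp (f : ℝ → EReal) : EReal :=
  sSup ((fun θ : ℝ => (θ : EReal)) '' {θ : ℝ | f θ = enat f θ})

/-- `flt f = ((f*)°)*`. -/
def flt (f : ℝ → EReal) : ℝ → EReal := Fd (sweep (Fd f))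

/-- The set where `f` is finite. -/
def Phi (f : ℝ → EReal) : Set ℝ := {θ : ℝ | f θ < ⊤}

/-- `A⁺`: points in `A` or above a point of `A`. -/
def plusSet (A : Set ℝ) : Set ℝ := {x : ℝ | ∃ a ∈ A, a ≤ x}

/-- The subdifferential of `f` at `φ`. -/
def esubdiff (f : ℝ → EReal) (φ : ℝ) : Set ℝ :=
  {a : ℝ | ∀ θ : ℝ, f φ + ((a * (θ - φ) : ℝ) : EReal) ≤ f θ}

open Classical in
/-- The convex indicator of a set: `0` on `C` and `+∞` off it. -/
def echi (C : Set ℝ) : ℝ → EReal := fun θ => if θ ∈ C then 0 else ⊤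

namespace EHelp

/-! ### EReal basics -/

lemma cases3 (x : EReal) : x = ⊥ ∨ x = ⊤ ∨ ∃ r : ℝ, x = r := by
  induction x using EReal.rec with
  | bot => exact Or.inl rfl
  | coe r => exact Or.inr (Or.inr ⟨r, rfl⟩)
  | top => exact Or.inr (Or.inl rfl)

lemma eq_bot_of_le_all {x : EReal} (h : ∀ r : ℝ, x ≤ (r : EReal)) : x = ⊥ := by
  rcases cases3 x with h1 | h1 | ⟨r, rfl⟩
  · exact h1
  · exact absurd (h1 ▸ h 0) (by simp)
  · have := h (r - 1)
    rw [EReal.coe_le_coe_iff] at this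
    linarith

lemma le_coe_of_forall_eps {x : EReal} {b : ℝ} (h : ∀ ε : ℝ, 0 < ε → x ≤ ((b + ε : ℝ) : EReal)) :
    x ≤ (b : EReal) := by
  rcases cases3 x with h1 | h1 | ⟨r, rfl⟩
  · simp [h1]
  · have := h1 ▸ h 1 one_pos
    exact absurd this (by exact not_le.2 (EReal.coe_lt_top _))
  · rw [EReal.coe_le_coe_iff]
    refine le_of_forall_pos_le_add fun ε hε => ?_
    have := h ε hε; rwa [EReal.coe_le_coe_iff] at this

lemma exists_coe_ge {x : EReal} (h : x ≠ ⊤) : ∃ r : ℝ, x ≤ (r : EReal) :=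
  ⟨x.toReal, EReal.le_coe_toReal h⟩

lemma mul_coe_pos_eq_div {x : EReal} {c : ℝ} (hc : c ≠ 0) :
    x * ((c⁻¹ : ℝ) : EReal) = x / (c : EReal) := by
  rw [EReal.div_eq_inv_mul, EReal.mul_comm]
  norm_cast

/-- `(c * (x * c⁻¹)) = x` for `0 < c`. -/
lemma mul_mul_inv {x : EReal} {c : ℝ} (hc : 0 < c) :
    ((c : ℝ) : EReal) * (x * ((c⁻¹ : ℝ) : EReal)) = x := by
  rw [mul_coe_pos_eq_div hc.ne', EReal.mul_div_cancel] <;> simp [hc.ne']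

/-- `(c * x) * c⁻¹ = x` for `0 < c`. -/
lemma mul_inv_cancel_right {x : EReal} {c : ℝ} (hc : 0 < c) :
    (((c : ℝ) : EReal) * x) * ((c⁻¹ : ℝ) : EReal) = x := by
  rw [mul_coe_pos_eq_div hc.ne', EReal.mul_comm ((c : ℝ) : EReal) x, ← EReal.mul_div,
    EReal.div_self (by simp) (by simp) (by exact_mod_cast hc.ne'), mul_one]

lemma mul_inv_mono {x y : EReal} {c : ℝ} (hxy : x ≤ y) (hc : 0 ≤ c) :
    x * ((c : ℝ) : EReal) ≤ y * ((c : ℝ) : EReal) :=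
  mul_le_mul_of_nonneg_right hxy (by exact_mod_cast hc)

lemma coe_mul_mono {x y : EReal} {c : ℝ} (hxy : x ≤ y) (hc : 0 ≤ c) :
    ((c : ℝ) : EReal) * x ≤ ((c : ℝ) : EReal) * y := by
  rw [EReal.mul_comm, EReal.mul_comm (c : EReal) y]; exact mul_inv_mono hxy hc

lemma mul_inv_le_iff {x y : EReal} {c : ℝ} (hc : 0 < c) :
    x * ((c⁻¹ : ℝ) : EReal) ≤ y ↔ x ≤ ((c : ℝ) : EReal) * y := by
  rw [mul_coe_pos_eq_div hc.ne']
  exact EReal.div_le_iff_le_mul (by exact_mod_cast hc) (by simp)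

lemma eq_bot_of_mul_inv_le_bot {x : EReal} {c : ℝ} (hc : 0 < c)
    (h : x * ((c⁻¹ : ℝ) : EReal) ≤ ⊥) : x = ⊥ := by
  have h0 : x * ((c⁻¹ : ℝ) : EReal) = ⊥ := le_bot_iff.1 h
  have := mul_mul_inv (x := x) hc
  rw [h0, EReal.coe_mul_bot_of_pos hc] at this
  exact this.symm

lemma le_add_of_nonneg_right' {x y : EReal} (hy : 0 ≤ y) : x ≤ x + y := by
  nth_rw 1 [← add_zero x]
  exact add_le_add_right hy x

lemma eq_bot_of_add_top_le_coe {x : EReal} {t : ℝ} (h : x + ⊤ ≤ (t : EReal)) : x = ⊥ := by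
  by_contra hx
  rw [EReal.add_top_of_ne_bot hx] at h
  exact absurd h (by simp)

/-! ### convexity helpers -/

lemma cvx {h : ℝ → EReal} (hc : EConvex h) {x1 x2 a1 a2 : ℝ}
    (h1 : h x1 ≤ (a1 : EReal)) (h2 : h x2 ≤ (a2 : EReal)) {l m : ℝ}
    (hl : 0 ≤ l) (hm : 0 ≤ m) (hs : l + m = 1) :
    h (l * x1 + m * x2) ≤ ((l * a1 + m * a2 : ℝ) : EReal) := by
  have := hc (x := (x1, a1)) (y := (x2, a2)) h1 h2 hl hm hs
  simpa [Prod.smul_mk, Prod.mk_add_mk, smul_eq_mul] using this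

lemma spread {h : ℝ → EReal} (hc : EConvex h) {a b y : ℝ} (hay : a < y) (hyb : y < b)
    (hd : (h a = ⊥ ∧ h b < ⊤) ∨ (h a < ⊤ ∧ h b = ⊥)) : h y = ⊥ := by
  have hab : a < b := hay.trans hyb
  set l : ℝ := (b - y) / (b - a) with hldef
  set m : ℝ := (y - a) / (b - a) with hmdef
  have hl : 0 < l := by apply div_pos <;> linarith
  have hm : 0 < m := by apply div_pos <;> linarith
  have hba : b - a ≠ 0 := by intro hz; linarith
  have hs : l + m = 1 := by rw [hldef, hmdef, ← add_div, div_eq_one_iff_eq hba]; ring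
  have hy : l * a + m * b = y := by rw [hldef, hmdef]; field_simp; ring
  apply eq_bot_of_le_all
  intro r
  rcases hd with ⟨ha, hb⟩ | ⟨ha, hb⟩
  · obtain ⟨u2, hu2⟩ := exists_coe_ge hb.ne
    have h1 : h a ≤ (((r - m * u2) / l : ℝ) : EReal) := ha ▸ bot_le
    have := cvx hc h1 hu2 hl.le hm.le hs
    rw [hy] at this
    refine this.trans ?_
    rw [EReal.coe_le_coe_iff]
    field_simp; linarith
  · obtain ⟨u1, hu1⟩ := exists_coe_ge ha.ne
    have h2 : h b ≤ (((r - l * u1) / m : ℝ) : EReal) := hb ▸ bot_le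
    have := cvx hc hu1 h2 hl.le hm.le hs
    rw [hy] at this
    refine this.trans ?_
    rw [EReal.coe_le_coe_iff]
    field_simp; linarith

lemma econvex_add {f g : ℝ → EReal} (hf : EConvex f) (hg : EConvex g)
    (hgb : ∀ y, g y ≠ ⊥) : EConvex (fun x => f x + g x) := by
  rintro ⟨x1, t1⟩ ht1 ⟨x2, t2⟩ ht2 l m hl hm hs
  simp only [mem_setOf_eq] at ht1 ht2 ⊢
  rcases eq_or_lt_of_le hl with rfl | hl'
  · simp only [zero_add] at hs; subst hs; simpa using ht2
  rcases eq_or_lt_of_le hm with rfl | hm'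
  · simp only [add_zero] at hs; subst hs; simpa using ht1
  simp only [Prod.smul_mk, Prod.mk_add_mk, smul_eq_mul]
  have hftop : ∀ x : ℝ, ∀ t : ℝ, f x + g x ≤ (t : EReal) → f x ≠ ⊤ := by
    intro x t ht hfx
    rw [hfx, EReal.top_add_of_ne_bot (hgb x)] at ht
    exact absurd ht (by simp)
  have hf1t := hftop _ _ ht1
  have hf2t := hftop _ _ ht2
  by_cases hb1 : f x1 = ⊥
  · obtain ⟨a2, ha2⟩ := exists_coe_ge hf2t
    have : f (l * x1 + m * x2) = ⊥ := by
      apply eq_bot_of_le_all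
      intro r
      have h1 : f x1 ≤ (((r - m * a2) / l : ℝ) : EReal) := hb1 ▸ bot_le
      have := cvx hf h1 ha2 hl hm hs
      refine this.trans ?_
      rw [EReal.coe_le_coe_iff]
      field_simp; linarith
    simp [this]
  by_cases hb2 : f x2 = ⊥
  · obtain ⟨a1, ha1⟩ := exists_coe_ge hf1t
    have : f (l * x1 + m * x2) = ⊥ := by
      apply eq_bot_of_le_all
      intro r
      have h2 : f x2 ≤ (((r - l * a1) / m : ℝ) : EReal) := hb2 ▸ bot_le
      have := cvx hf ha1 h2 hl hm hs
      refine this.trans ?_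
      rw [EReal.coe_le_coe_iff]
      field_simp; linarith
    simp [this]
  have hg1t : g x1 ≠ ⊤ := by
    intro hgx
    rw [hgx, EReal.add_top_of_ne_bot hb1] at ht1
    exact absurd ht1 (by simp)
  have hg2t : g x2 ≠ ⊤ := by
    intro hgx
    rw [hgx, EReal.add_top_of_ne_bot hb2] at ht2
    exact absurd ht2 (by simp)
  set a1 := (f x1).toReal; set a2 := (f x2).toReal
  set b1 := (g x1).toReal; set b2 := (g x2).toReal
  have ea1 : f x1 = (a1 : EReal) := (EReal.coe_toReal hf1t hb1).symm
  have ea2 : f x2 = (a2 : EReal) := (EReal.coe_toReal hf2t hb2).symm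
  have eb1 : g x1 = (b1 : EReal) := (EReal.coe_toReal hg1t (hgb x1)).symm
  have eb2 : g x2 = (b2 : EReal) := (EReal.coe_toReal hg2t (hgb x2)).symm
  rw [ea1, eb1] at ht1; rw [ea2, eb2] at ht2
  rw [← EReal.coe_add, EReal.coe_le_coe_iff] at ht1 ht2
  have c1 := cvx hf ea1.le ea2.le hl hm hs
  have c2 := cvx hg eb1.le eb2.le hl hm hs
  calc f (l * x1 + m * x2) + g (l * x1 + m * x2)
      ≤ ((l * a1 + m * a2 : ℝ) : EReal) + ((l * b1 + m * b2 : ℝ) : EReal) :=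
        add_le_add c1 c2
    _ = (((l * a1 + m * a2) + (l * b1 + m * b2) : ℝ) : EReal) := by norm_cast
    _ ≤ ((l * t1 + m * t2 : ℝ) : EReal) := by
        rw [EReal.coe_le_coe_iff]; nlinarith

/-! ### echi -/

lemma echi_mem {C : Set ℝ} {θ : ℝ} (h : θ ∈ C) : echi C θ = 0 := by simp [echi, h]

lemma echi_not_mem {C : Set ℝ} {θ : ℝ} (h : θ ∉ C) : echi C θ = ⊤ := by simp [echi, h]

lemma echi_nonneg (C : Set ℝ) (θ : ℝ) : 0 ≤ echi C θ := by
  by_cases h : θ ∈ C <;> simp [echi, h]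

lemma echi_ne_bot (C : Set ℝ) (θ : ℝ) : echi C θ ≠ ⊥ := by
  by_cases h : θ ∈ C <;> simp [echi, h]

lemma econvex_echi {C : Set ℝ} (hC : Convex ℝ C) : EConvex (echi C) := by
  rintro ⟨x1, t1⟩ ht1 ⟨x2, t2⟩ ht2 l m hl hm hs
  simp only [mem_setOf_eq] at ht1 ht2 ⊢
  have hx1 : x1 ∈ C := by
    by_contra h
    rw [echi_not_mem h] at ht1
    exact absurd ht1 (by simp)
  have hx2 : x2 ∈ C := by
    by_contra h
    rw [echi_not_mem h] at ht2
    exact absurd ht2 (by simp)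
  rw [echi_mem hx1] at ht1; rw [echi_mem hx2] at ht2
  have hmem : l * x1 + m * x2 ∈ C := by
    have := hC hx1 hx2 hl hm hs
    simpa [smul_eq_mul] using this
  simp only [Prod.smul_mk, Prod.mk_add_mk, smul_eq_mul]
  rw [echi_mem hmem]
  have h1 : (0:ℝ) ≤ t1 := by exact_mod_cast ht1
  have h2 : (0:ℝ) ≤ t2 := by exact_mod_cast ht2
  have : (0:ℝ) ≤ l * t1 + m * t2 := by positivity
  exact_mod_cast this

lemma memC {C : Set ℝ} {p : ℝ} (hC : Convex ℝ C) (hp : IsLUB C p) {c0 x : ℝ}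
    (hc0 : c0 ∈ C) (h1 : c0 ≤ x) (h2 : x < p) : x ∈ C := by
  obtain ⟨c, hcC, hxc, _⟩ := hp.exists_between h2
  exact hC.ordConnected.out hc0 hcC ⟨h1, hxc.le⟩

/-! ### enat as greatest element -/

lemma le_enat {f g : ℝ → EReal} (hc : EConvex g) (hle : ∀ y, g y ≤ f y)
    (ha : AntitoneOn (fun θ : ℝ => g θ * ((θ⁻¹ : ℝ) : EReal)) (Set.Ioi 0)) (x : ℝ) :
    g x ≤ enat f x :=
  le_iSup (fun g : {g : ℝ → EReal // EConvex g ∧ (∀ y, g y ≤ f y) ∧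
      AntitoneOn (fun θ : ℝ => g θ * ((θ⁻¹ : ℝ) : EReal)) (Set.Ioi 0)} => g.1 x) ⟨g, hc, hle, ha⟩

lemma enat_le {f : ℝ → EReal} (N : ℝ → EReal)
    (hN : ∀ g : ℝ → EReal, EConvex g → (∀ y, g y ≤ f y) →
      AntitoneOn (fun θ : ℝ => g θ * ((θ⁻¹ : ℝ) : EReal)) (Set.Ioi 0) → ∀ x, g x ≤ N x)
    (x : ℝ) : enat f x ≤ N x :=
  iSup_le fun g => hN g.1 g.2.1 g.2.2.1 g.2.2.2 x

lemma enat_convex (f : ℝ → EReal) : EConvex (enat f) := by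
  have : {p : ℝ × ℝ | enat f p.1 ≤ (p.2 : EReal)} =
      ⋂ g : {g : ℝ → EReal // EConvex g ∧ (∀ y, g y ≤ f y) ∧
        AntitoneOn (fun θ : ℝ => g θ * ((θ⁻¹ : ℝ) : EReal)) (Set.Ioi 0)},
        {p : ℝ × ℝ | g.1 p.1 ≤ (p.2 : EReal)} := by
    ext q
    simp only [mem_setOf_eq, mem_iInter, enat, iSup_le_iff]
  rw [EConvex, this]
  exact convex_iInter fun g => g.2.1

lemma enat_anti (f : ℝ → EReal) :
    AntitoneOn (fun θ : ℝ => enat f θ * ((θ⁻¹ : ℝ) : EReal)) (Set.Ioi 0) := by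
  intro θ1 h1 θ2 h2 h12
  simp only [mem_Ioi] at h1 h2
  simp only
  rw [mul_inv_le_iff h2]
  apply iSup_le
  intro g
  rw [← mul_inv_le_iff h2]
  calc g.1 θ2 * ((θ2⁻¹ : ℝ) : EReal) ≤ g.1 θ1 * ((θ1⁻¹ : ℝ) : EReal) :=
        g.2.2.2 h1 h2 h12
    _ ≤ enat f θ1 * ((θ1⁻¹ : ℝ) : EReal) :=
        mul_inv_mono (le_enat g.2.1 g.2.2.1 g.2.2.2 θ1) (by positivity)

end EHelp
namespace EHelp

/-- if n is ⊥ somewhere to the right of p, right continuity forces n p = ⊥. -/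
lemma bot_right {n : ℝ → EReal} (hnc : EConvex n) {ψ0 p θ : ℝ} (hψ0p : ψ0 ≤ p)
    (hψ0t : n ψ0 ≠ ⊤) (hrc : ContinuousWithinAt n (Set.Ici p) p) (hpθ : p < θ)
    (hbot : n θ = ⊥) : n p = ⊥ := by
  have hev : ∀ᶠ μ in 𝓝[>] p, n μ = ⊥ := by
    filter_upwards [Ioo_mem_nhdsGT_of_mem ⟨le_refl p, hpθ⟩] with μ hμ
    exact spread hnc (lt_of_le_of_lt hψ0p hμ.1) hμ.2
      (Or.inr ⟨lt_top_iff_ne_top.2 hψ0t, hbot⟩)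
  have T : Tendsto n (𝓝[>] p) (𝓝 (n p)) :=
    hrc.tendsto.mono_left (nhdsWithin_mono p Ioi_subset_Ici_self)
  have T2 : Tendsto n (𝓝[>] p) (𝓝 (⊥ : EReal)) :=
    Tendsto.congr' (hev.mono fun x hx => hx.symm) tendsto_const_nhds
  exact tendsto_nhds_unique T T2

/-- the sub-level line lies below n everywhere left of p (n p real). -/
lemma line_le {n : ℝ → EReal} (hnc : EConvex n)
    (hna : AntitoneOn (fun θ : ℝ => n θ * ((θ⁻¹ : ℝ) : EReal)) (Set.Ioi 0))
    {p b : ℝ} (hp0 : 0 < p) (hnp : n p = (b : EReal)) {θ : ℝ} (hθp : θ ≤ p) :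
    ((θ * (b / p) : ℝ) : EReal) ≤ n θ := by
  rcases lt_or_ge 0 θ with hθ0 | hθ0
  · -- positive θ : use the slope antitonicity
    have hs := hna (mem_Ioi.2 hθ0) (mem_Ioi.2 hp0) hθp
    simp only at hs
    rw [hnp] at hs
    have : ((b * p⁻¹ : ℝ) : EReal) ≤ n θ * ((θ⁻¹ : ℝ) : EReal) := by
      rw [EReal.coe_mul]; exact hs
    have h2 := coe_mul_mono (c := θ) this (le_of_lt hθ0)
    rw [mul_mul_inv hθ0] at h2
    calc ((θ * (b / p) : ℝ) : EReal) = ((θ : ℝ) : EReal) * ((b * p⁻¹ : ℝ) : EReal) := by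
          rw [← EReal.coe_mul]; norm_num [div_eq_mul_inv]
      _ ≤ n θ := h2
  · -- θ ≤ 0 : contradiction argument through a point θ0 ∈ (0, p)
    by_contra hcon
    push_neg at hcon
    obtain ⟨c1, hc1n, hc1lt⟩ : ∃ c1 : ℝ, n θ ≤ (c1 : EReal) ∧ c1 < θ * (b / p) := by
      rcases cases3 (n θ) with hb | hb | ⟨r, hr⟩
      · exact ⟨θ * (b / p) - 1, hb ▸ bot_le, by linarith⟩
      · rw [hb] at hcon; exact absurd (le_top) (not_le.2 hcon)
      · refine ⟨r, hr.le, ?_⟩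
        rw [hr, EReal.coe_lt_coe_iff] at hcon; exact hcon
    set θ0 : ℝ := p / 2 with hθ0def
    have hθ00 : 0 < θ0 := by positivity
    have hθ0p : θ0 < p := by rw [hθ0def]; linarith
    have hθθ0 : θ < θ0 := lt_of_le_of_lt hθ0 hθ00
    -- convexity at θ0
    set l : ℝ := (p - θ0) / (p - θ) with hldef
    set m : ℝ := (θ0 - θ) / (p - θ) with hmdef
    have hpθ : p - θ ≠ 0 := by intro hz; nlinarith
    have hl : 0 < l := by apply div_pos <;> nlinarith
    have hm : 0 < m := by apply div_pos <;> nlinarith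
    have hsum : l + m = 1 := by
      rw [hldef, hmdef, ← add_div, div_eq_one_iff_eq hpθ]; ring
    have hcomb : l * θ + m * p = θ0 := by rw [hldef, hmdef]; field_simp; ring
    have hcvx := cvx hnc hc1n hnp.le hl.le hm.le hsum
    rw [hcomb] at hcvx
    -- slope bound at θ0
    have hline := hna (mem_Ioi.2 hθ00) (mem_Ioi.2 hp0) hθ0p.le
    simp only at hline
    rw [hnp] at hline
    have hline2 : ((θ0 * (b / p) : ℝ) : EReal) ≤ n θ0 := by
      have : ((b * p⁻¹ : ℝ) : EReal) ≤ n θ0 * ((θ0⁻¹ : ℝ) : EReal) := by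
        rw [EReal.coe_mul]; exact hline
      have h2 := coe_mul_mono (c := θ0) this hθ00.le
      rw [mul_mul_inv hθ00] at h2
      calc ((θ0 * (b / p) : ℝ) : EReal) = ((θ0 : ℝ) : EReal) * ((b * p⁻¹ : ℝ) : EReal) := by
            rw [← EReal.coe_mul]; norm_num [div_eq_mul_inv]
        _ ≤ n θ0 := h2
    have := hline2.trans hcvx
    rw [EReal.coe_le_coe_iff] at this
    -- real contradiction
    have hkey : l * c1 + m * b < l * (θ * (b / p)) + m * b := by nlinarith
    have hline3 : l * (θ * (b / p)) + m * b = θ0 * (b / p) := by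
      field_simp
      linear_combination b * hcomb
    linarith

end EHelp
namespace EHelp

/-- key lemma: any admissible minorant of `n + χ_C` satisfies `g p ≤ n p`. -/
lemma key_gp {n g : ℝ → EReal} {C : Set ℝ} {p ψ0 : ℝ}
    (hnc : EConvex n)
    (hC : Convex ℝ C) (hp : IsLUB C p) (hp0 : 0 < p)
    (hψ0C : ψ0 ∈ C) (hψ0t : n ψ0 ≠ ⊤)
    (hgle : ∀ y, g y ≤ n y + echi C y)
    (hga : AntitoneOn (fun θ : ℝ => g θ * ((θ⁻¹ : ℝ) : EReal)) (Set.Ioi 0)) :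
    g p ≤ n p := by
  by_cases hpC : p ∈ C
  · have := hgle p
    rwa [echi_mem hpC, add_zero] at this
  have hψ0p : ψ0 < p := lt_of_le_of_ne (hp.1 hψ0C) (by rintro rfl; exact hpC hψ0C)
  -- a point ψ ∈ C ∩ (max ψ0 0, p) can be chosen arbitrarily; generic properties:
  have hψprop : ∀ ψ : ℝ, max ψ0 0 < ψ → ψ < p → ψ ∈ C ∧ 0 < ψ ∧ ψ0 < ψ := by
    intro ψ h1 h2
    have h0 : 0 < ψ := lt_of_le_of_lt (le_max_right _ _) h1
    have hψ0ψ : ψ0 < ψ := lt_of_le_of_lt (le_max_left _ _) h1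
    exact ⟨memC hC hp hψ0C hψ0ψ.le h2, h0, hψ0ψ⟩
  have hmp : max ψ0 0 < p := max_lt hψ0p hp0
  -- the case n p = ⊥ or n ψ0 = ⊥ : then g p = ⊥
  have hbotcase : (n p = ⊥ ∨ n ψ0 = ⊥) → n p ≠ ⊤ → g p ≤ n p := by
    intro hd hnpt
    set ψ : ℝ := (max ψ0 0 + p) / 2 with hψdef
    obtain ⟨hψC, hψpos, hψ0ψ⟩ := hψprop ψ (by rw [hψdef]; linarith) (by rw [hψdef]; linarith)
    have hψp : ψ < p := by rw [hψdef]; linarith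
    have hnψ : n ψ = ⊥ := by
      rcases hd with hd | hd
      · exact spread hnc hψ0ψ hψp (Or.inr ⟨lt_top_iff_ne_top.2 hψ0t, hd⟩)
      · exact spread hnc hψ0ψ hψp (Or.inl ⟨hd, lt_top_iff_ne_top.2 hnpt⟩)
    have hgψ : g ψ ≤ ⊥ := by
      have := hgle ψ
      rwa [echi_mem hψC, hnψ, add_zero] at this
    have hslope := hga (mem_Ioi.2 hψpos) (mem_Ioi.2 hp0) hψp.le
    simp only at hslope
    have hb2 : g ψ * ((ψ⁻¹ : ℝ) : EReal) ≤ ⊥ := by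
      rw [le_bot_iff.1 hgψ,
        EReal.bot_mul_of_pos (by exact_mod_cast inv_pos.2 hψpos : (0:EReal) < ((ψ⁻¹:ℝ):EReal))]
    exact (eq_bot_of_mul_inv_le_bot hp0 (hslope.trans hb2)) ▸ bot_le
  rcases cases3 (n p) with hnp | hnp | ⟨b, hnp⟩
  · exact hbotcase (Or.inl hnp) (by rw [hnp]; exact bot_ne_top)
  · rw [hnp]; exact le_top
  rcases cases3 (n ψ0) with hnψ0 | hnψ0 | ⟨a, hnψ0⟩
  · exact hbotcase (Or.inr hnψ0) (by rw [hnp]; exact EReal.coe_ne_top b)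
  · exact absurd hnψ0 hψ0t
  -- main case : everything real
  rw [hnp]
  apply le_coe_of_forall_eps
  intro ε hε
  -- chain estimate valid for every ψ ∈ (max ψ0 0, p)
  have hchain : ∀ ψ : ℝ, max ψ0 0 < ψ → ψ < p →
      g p ≤ ((p * ((((p - ψ) / (p - ψ0)) * a + ((ψ - ψ0) / (p - ψ0)) * b) * ψ⁻¹) : ℝ) : EReal) := by
    intro ψ h1 h2
    obtain ⟨hψC, hψpos, hψ0ψ⟩ := hψprop ψ h1 h2
    set q : ℝ := ((p - ψ) / (p - ψ0)) * a + ((ψ - ψ0) / (p - ψ0)) * b with hqdef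
    have hpψ0 : p - ψ0 ≠ 0 := by intro hz; linarith
    have hl : (0:ℝ) ≤ (p - ψ) / (p - ψ0) := by apply div_nonneg <;> linarith
    have hm : (0:ℝ) ≤ (ψ - ψ0) / (p - ψ0) := by apply div_nonneg <;> linarith
    have hsum : (p - ψ) / (p - ψ0) + (ψ - ψ0) / (p - ψ0) = 1 := by
      rw [← add_div, div_eq_one_iff_eq hpψ0]; ring
    have hcomb : ((p - ψ) / (p - ψ0)) * ψ0 + ((ψ - ψ0) / (p - ψ0)) * p = ψ := by
      field_simp; ring
    have hnψ : n ψ ≤ (q : EReal) := by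
      have := cvx hnc hnψ0.le hnp.le hl hm hsum
      rwa [hcomb] at this
    have hgψ : g ψ ≤ (q : EReal) := by
      refine le_trans ?_ hnψ
      have := hgle ψ
      rwa [echi_mem hψC, add_zero] at this
    have hslope := hga (mem_Ioi.2 hψpos) (mem_Ioi.2 hp0) h2.le
    simp only at hslope
    have step1 : g p * ((p⁻¹ : ℝ) : EReal) ≤ (q : EReal) * ((ψ⁻¹ : ℝ) : EReal) :=
      hslope.trans (mul_inv_mono hgψ (inv_pos.2 hψpos).le)
    have step2 := coe_mul_mono (c := p) step1 hp0.le
    rw [mul_mul_inv hp0] at step2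
    calc g p ≤ ((p : ℝ) : EReal) * ((q : EReal) * ((ψ⁻¹ : ℝ) : EReal)) := step2
      _ = ((p * (q * ψ⁻¹) : ℝ) : EReal) := by rw [← EReal.coe_mul, ← EReal.coe_mul]
  -- now choose ψ close to p by continuity
  have hT : Tendsto (fun ψ : ℝ =>
      p * ((((p - ψ) / (p - ψ0)) * a + ((ψ - ψ0) / (p - ψ0)) * b) * ψ⁻¹)) (𝓝[<] p) (𝓝 b) := by
    have hpψ0 : p - ψ0 ≠ 0 := by intro hz; linarith
    have hcont : ContinuousAt (fun ψ : ℝ =>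
        p * ((((p - ψ) / (p - ψ0)) * a + ((ψ - ψ0) / (p - ψ0)) * b) * ψ⁻¹)) p := by
      apply ContinuousAt.mul continuousAt_const
      apply ContinuousAt.mul
      · fun_prop
      · exact continuousAt_inv₀ hp0.ne'
    have hval : p * ((((p - p) / (p - ψ0)) * a + ((p - ψ0) / (p - ψ0)) * b) * p⁻¹) = b := by
      field_simp; ring
    have := hcont.tendsto.mono_left (nhdsWithin_le_nhds (s := Iio p))
    rwa [hval] at this
  have hev : ∀ᶠ ψ in 𝓝[<] p,
      p * ((((p - ψ) / (p - ψ0)) * a + ((ψ - ψ0) / (p - ψ0)) * b) * ψ⁻¹) < b + ε :=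
    hT (Iio_mem_nhds (by linarith))
  have hev2 : ∀ᶠ ψ in 𝓝[<] p, ψ ∈ Ioo (max ψ0 0) p :=
    Ioo_mem_nhdsLT_of_mem ⟨hmp, le_refl p⟩
  obtain ⟨ψ, hψ1, hψ2⟩ := (hev.and hev2).exists
  calc g p ≤ _ := hchain ψ hψ2.1 hψ2.2
    _ ≤ ((b + ε : ℝ) : EReal) := by exact_mod_cast hψ1.le

end EHelp
namespace EHelp

section Nlemmas

variable {n : ℝ → EReal} {C : Set ℝ} {p ψ0 : ℝ}

/-- the candidate function -/
def NF (n : ℝ → EReal) (C : Set ℝ) (p : ℝ) : ℝ → EReal :=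
  fun θ => if θ < p then n θ + echi C θ else (θ : EReal) * (n p * ((p⁻¹ : ℝ) : EReal))

lemma NF_le (hnc : EConvex n) (hp : IsLUB C p) (hp0 : 0 < p)
    (hψ0C : ψ0 ∈ C) (hψ0t : n ψ0 ≠ ⊤)
    (hrc : ContinuousWithinAt n (Set.Ici p) p) :
    ∀ θ, NF n C p θ ≤ n θ + echi C θ := by
  intro θ
  rcases lt_trichotomy θ p with hθ | rfl | hθ
  · rw [NF, if_pos hθ]
  · rw [NF, if_neg (lt_irrefl _), mul_mul_inv hp0]
    exact le_add_of_nonneg_right' (echi_nonneg C _)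
  · rw [NF, if_neg (not_lt.2 hθ.le)]
    have hθC : θ ∉ C := fun h => absurd (hp.1 h) (not_le.2 hθ)
    by_cases hnθ : n θ = ⊥
    · have hnp : n p = ⊥ := bot_right hnc (hp.1 hψ0C) hψ0t hrc hθ hnθ
      rw [hnp, EReal.bot_mul_of_pos (by exact_mod_cast inv_pos.2 hp0 : (0:EReal) < _),
        EReal.coe_mul_bot_of_pos (hp0.trans hθ)]
      exact bot_le
    · rw [echi_not_mem hθC, EReal.add_top_of_ne_bot hnθ]
      exact le_top

lemma NF_anti (hna : AntitoneOn (fun θ : ℝ => n θ * ((θ⁻¹ : ℝ) : EReal)) (Set.Ioi 0))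
    (hC : Convex ℝ C) (hp : IsLUB C p) (hp0 : 0 < p) :
    AntitoneOn (fun θ : ℝ => NF n C p θ * ((θ⁻¹ : ℝ) : EReal)) (Set.Ioi 0) := by
  intro θ1 h1 θ2 h2 h12
  simp only [mem_Ioi] at h1 h2
  simp only [NF]
  have hpm : p ∈ Ioi (0:ℝ) := mem_Ioi.2 hp0
  by_cases hθ1 : θ1 < p
  · by_cases hθ2 : θ2 < p
    · rw [if_pos hθ1, if_pos hθ2]
      by_cases hC2 : θ2 ∈ C
      · by_cases hC1 : θ1 ∈ C
        · rw [echi_mem hC1, echi_mem hC2, add_zero, add_zero]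
          exact hna (mem_Ioi.2 h1) (mem_Ioi.2 h2) h12
        · rw [echi_mem hC2, add_zero, echi_not_mem hC1]
          by_cases hb1 : n θ1 = ⊥
          · have := hna (mem_Ioi.2 h1) (mem_Ioi.2 h2) h12
            simp only at this
            rw [hb1] at this ⊢
            rw [EReal.bot_add]
            refine this.trans (le_of_eq ?_)
            rw [EReal.bot_mul_of_pos (by exact_mod_cast inv_pos.2 h1 : (0:EReal) < _)]
          · rw [EReal.add_top_of_ne_bot hb1,
              EReal.top_mul_of_pos (by exact_mod_cast inv_pos.2 h1 : (0:EReal) < _)]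
            exact le_top
      · have hC1 : θ1 ∉ C := fun h => hC2 (memC hC hp h h12 hθ2)
        rw [echi_not_mem hC1, echi_not_mem hC2]
        by_cases hb2 : n θ2 = ⊥
        · rw [hb2, EReal.bot_add,
            EReal.bot_mul_of_pos (by exact_mod_cast inv_pos.2 h2 : (0:EReal) < _)]
          exact bot_le
        · have hb1 : n θ1 ≠ ⊥ := by
            intro hb1
            have := hna (mem_Ioi.2 h1) (mem_Ioi.2 h2) h12
            simp only [hb1] at this
            rw [EReal.bot_mul_of_pos (by exact_mod_cast inv_pos.2 h1 : (0:EReal) < _),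
              le_bot_iff] at this
            exact hb2 (eq_bot_of_mul_inv_le_bot h2 this.le)
          rw [EReal.add_top_of_ne_bot hb1, EReal.add_top_of_ne_bot hb2,
            EReal.top_mul_of_pos (by exact_mod_cast inv_pos.2 h2 : (0:EReal) < _),
            EReal.top_mul_of_pos (by exact_mod_cast inv_pos.2 h1 : (0:EReal) < _)]
    · -- θ1 < p ≤ θ2
      rw [if_pos hθ1, if_neg hθ2, mul_inv_cancel_right h2]
      by_cases hC1 : θ1 ∈ C
      · rw [echi_mem hC1, add_zero]
        exact hna (mem_Ioi.2 h1) hpm hθ1.le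
      · rw [echi_not_mem hC1]
        by_cases hb1 : n θ1 = ⊥
        · have := hna (mem_Ioi.2 h1) hpm hθ1.le
          simp only [hb1] at this
          rw [EReal.bot_mul_of_pos (by exact_mod_cast inv_pos.2 h1 : (0:EReal) < _),
            le_bot_iff] at this
          rw [hb1, EReal.bot_add,
            EReal.bot_mul_of_pos (by exact_mod_cast inv_pos.2 h1 : (0:EReal) < _)]
          exact this.le
        · rw [EReal.add_top_of_ne_bot hb1,
            EReal.top_mul_of_pos (by exact_mod_cast inv_pos.2 h1 : (0:EReal) < _)]
          exact le_top
  · -- p ≤ θ1 ≤ θ2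
    have hθ2 : ¬ θ2 < p := fun h => hθ1 (lt_of_le_of_lt h12 h)
    rw [if_neg hθ1, if_neg hθ2, mul_inv_cancel_right h1, mul_inv_cancel_right h2]

end Nlemmas
end EHelp
namespace EHelp
section Ncvx

variable {n : ℝ → EReal} {C : Set ℝ} {p ψ0 : ℝ}

lemma NF_convex_aux (hnc : EConvex n)
    (hna : AntitoneOn (fun θ : ℝ => n θ * ((θ⁻¹ : ℝ) : EReal)) (Set.Ioi 0))
    (hC : Convex ℝ C) (hp : IsLUB C p) (hp0 : 0 < p) :
    ∀ x1 t1 x2 t2 l m : ℝ, x1 ≤ x2 → NF n C p x1 ≤ (t1 : EReal) →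
      NF n C p x2 ≤ (t2 : EReal) → 0 < l → 0 < m → l + m = 1 →
      NF n C p (l * x1 + m * x2) ≤ ((l * t1 + m * t2 : ℝ) : EReal) := by
  intro x1 t1 x2 t2 l m hx12 ht1 ht2 hl hm hs
  set x : ℝ := l * x1 + m * x2 with hxdef
  by_cases h2p : x2 < p
  · -- everything to the left of p : N = n + χ there
    have h1p : x1 < p := lt_of_le_of_lt hx12 h2p
    have hxp : x < p := by
      have : x ≤ x2 := by nlinarith
      exact lt_of_le_of_lt this h2p
    simp only [NF, if_pos h1p] at ht1
    simp only [NF, if_pos h2p] at ht2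
    simp only [NF, if_pos hxp]
    exact cvx (econvex_add hnc (econvex_echi hC) (echi_ne_bot C)) ht1 ht2 hl.le hm.le hs
  push_neg at h2p
  have h2pos : (0:ℝ) < x2 := hp0.trans_le h2p
  by_cases h1p : x1 < p
  · -- the crossing case x1 < p ≤ x2
    have hx1x : x1 < x := by nlinarith
    rcases cases3 (n p) with hnp | hnp | ⟨b, hnp⟩
    · -- n p = ⊥
      by_cases hxp : x < p
      · have hnx1 : n x1 ≤ (t1 : EReal) := by
          simp only [NF, if_pos h1p] at ht1
          exact (le_add_of_nonneg_right' (echi_nonneg C x1)).trans ht1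
        have hnx : n x = ⊥ :=
          spread hnc hx1x hxp (Or.inr ⟨lt_of_le_of_lt hnx1 (EReal.coe_lt_top t1), hnp⟩)
        simp only [NF, if_pos hxp]
        rw [hnx, EReal.bot_add]
        exact bot_le
      · simp only [NF, if_neg hxp]
        rw [hnp, EReal.bot_mul_of_pos (by exact_mod_cast inv_pos.2 hp0 : (0:EReal) < _),
          EReal.coe_mul_bot_of_pos (lt_of_lt_of_le hp0 (not_lt.1 hxp))]
        exact bot_le
    · -- n p = ⊤ : impossible since NF x2 ≤ t2
      exfalso
      simp only [NF, if_neg (not_lt.2 h2p)] at ht2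
      rw [hnp, EReal.top_mul_of_pos (by exact_mod_cast inv_pos.2 hp0 : (0:EReal) < _),
        EReal.coe_mul_top_of_pos h2pos] at ht2
      exact absurd ht2 (by simp)
    · -- n p = b : the main crossing case
      have hsb : n p * ((p⁻¹ : ℝ) : EReal) = ((b * p⁻¹ : ℝ) : EReal) := by
        rw [hnp, ← EReal.coe_mul]
      have ht2' : x2 * (b * p⁻¹) ≤ t2 := by
        simp only [NF, if_neg (not_lt.2 h2p)] at ht2
        rw [hsb, ← EReal.coe_mul, EReal.coe_le_coe_iff] at ht2
        exact ht2
      by_cases hx1C : x1 ∈ C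
      · have hnx1 : n x1 ≤ (t1 : EReal) := by
          simp only [NF, if_pos h1p] at ht1
          rwa [echi_mem hx1C, add_zero] at ht1
        have ht1' : x1 * (b * p⁻¹) ≤ t1 := by
          have h0 := (line_le hnc hna hp0 hnp h1p.le).trans hnx1
          rw [EReal.coe_le_coe_iff] at h0
          rw [div_eq_mul_inv] at h0
          linarith [h0]
        by_cases hxp : x < p
        · -- interpolate n x between x1 and p
          have hxC : x ∈ C := memC hC hp hx1C hx1x.le hxp
          have hpx1 : p - x1 ≠ 0 := by intro hz; linarith
          set α : ℝ := (p - x) / (p - x1) with hαdef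
          set β : ℝ := (x - x1) / (p - x1) with hβdef
          have hα : 0 ≤ α := by apply div_nonneg <;> linarith
          have hβ : 0 ≤ β := by apply div_nonneg <;> linarith
          have hαβ : α + β = 1 := by
            rw [hαdef, hβdef, ← add_div, div_eq_one_iff_eq hpx1]; ring
          have hcomb : α * x1 + β * p = x := by rw [hαdef, hβdef]; field_simp; ring
          have hcv := cvx hnc hnx1 hnp.le hα hβ hαβ
          rw [hcomb] at hcv
          simp only [NF, if_pos hxp]
          rw [echi_mem hxC, add_zero]
          refine hcv.trans ?_
          rw [EReal.coe_le_coe_iff]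
          -- real algebra
          have hαl : α ≤ l := by
            have h1 : (α - l) * x1 = m * x2 - β * p := by nlinarith [hcomb]
            have h2 : m * x2 - β * p ≥ (m - β) * p := by nlinarith
            have h3 : m - β = α - l := by linarith
            have h4 : (α - l) * (x1 - p) ≥ 0 := by nlinarith
            nlinarith
          have hpp : p * p⁻¹ = 1 := mul_inv_cancel₀ hp0.ne'
          have hmx2 : m * x2 = (α - l) * x1 + β * p := by linarith [hcomb]
          have key : m * (x2 * (b * p⁻¹)) = (α - l) * (x1 * (b * p⁻¹)) + β * b := by
            linear_combination (b * p⁻¹) * hmx2 + β * b * hpp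
          have h5 : m * (x2 * (b * p⁻¹)) ≤ m * t2 := mul_le_mul_of_nonneg_left ht2' hm.le
          have h6 : 0 ≤ (l - α) * (t1 - x1 * (b * p⁻¹)) :=
            mul_nonneg (by linarith) (by linarith)
          nlinarith [h5, h6, key]
        · -- x ≥ p : linear value
          simp only [NF, if_neg hxp]
          rw [hsb, ← EReal.coe_mul, EReal.coe_le_coe_iff]
          push_neg at hxp
          nlinarith [mul_le_mul_of_nonneg_left ht2' hm.le,
            mul_le_mul_of_nonneg_left ht1' hl.le]
      · -- x1 ∉ C : impossible
        exfalso
        simp only [NF, if_pos h1p] at ht1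
        rw [echi_not_mem hx1C] at ht1
        have hx1b : n x1 = ⊥ := eq_bot_of_add_top_le_coe ht1
        set θ0 : ℝ := (max x1 0 + p) / 2 with hθ0def
        have hmx : max x1 0 < p := max_lt h1p hp0
        have hθ01 : x1 < θ0 := by
          have h := le_max_left x1 0
          rw [hθ0def]; linarith
        have hθ0pos : 0 < θ0 := by
          have h := le_max_right x1 0
          rw [hθ0def]; linarith
        have hθ0p : θ0 < p := by rw [hθ0def]; linarith
        have hθ0b : n θ0 = ⊥ :=
          spread hnc hθ01 hθ0p (Or.inl ⟨hx1b, by rw [hnp]; exact EReal.coe_lt_top b⟩)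
        have hsl := hna (mem_Ioi.2 hθ0pos) (mem_Ioi.2 hp0) hθ0p.le
        simp only [hθ0b] at hsl
        rw [EReal.bot_mul_of_pos (by exact_mod_cast inv_pos.2 hθ0pos : (0:EReal) < _),
          le_bot_iff] at hsl
        have := eq_bot_of_mul_inv_le_bot hp0 hsl.le
        rw [hnp] at this
        exact EReal.coe_ne_bot b this
  · -- p ≤ x1 ≤ x2 : everything on the linear part
    push_neg at h1p
    have hxp : ¬ x < p := by
      push_neg
      have : x1 ≤ x := by nlinarith
      linarith
    simp only [NF, if_neg (not_lt.2 h1p), if_neg (not_lt.2 h2p)] at ht1 ht2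
    simp only [NF, if_neg hxp]
    rcases cases3 (n p) with hnp | hnp | ⟨b, hnp⟩
    · rw [hnp, EReal.bot_mul_of_pos (by exact_mod_cast inv_pos.2 hp0 : (0:EReal) < _),
        EReal.coe_mul_bot_of_pos (lt_of_lt_of_le hp0 (not_lt.1 hxp))]
      exact bot_le
    · exfalso
      rw [hnp, EReal.top_mul_of_pos (by exact_mod_cast inv_pos.2 hp0 : (0:EReal) < _),
        EReal.coe_mul_top_of_pos h2pos] at ht2
      exact absurd ht2 (by simp)
    · have hsb : n p * ((p⁻¹ : ℝ) : EReal) = ((b * p⁻¹ : ℝ) : EReal) := by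
        rw [hnp, ← EReal.coe_mul]
      rw [hsb, ← EReal.coe_mul, EReal.coe_le_coe_iff] at ht1 ht2 ⊢
      nlinarith [mul_le_mul_of_nonneg_left ht1 hl.le, mul_le_mul_of_nonneg_left ht2 hm.le]

lemma NF_convex (hnc : EConvex n)
    (hna : AntitoneOn (fun θ : ℝ => n θ * ((θ⁻¹ : ℝ) : EReal)) (Set.Ioi 0))
    (hC : Convex ℝ C) (hp : IsLUB C p) (hp0 : 0 < p) : EConvex (NF n C p) := by
  rintro ⟨x1, t1⟩ ht1 ⟨x2, t2⟩ ht2 l m hl hm hs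
  simp only [mem_setOf_eq] at ht1 ht2 ⊢
  rcases eq_or_lt_of_le hl with rfl | hl'
  · simp only [zero_add] at hs; subst hs; simpa using ht2
  rcases eq_or_lt_of_le hm with rfl | hm'
  · simp only [add_zero] at hs; subst hs; simpa using ht1
  simp only [Prod.smul_mk, Prod.mk_add_mk, smul_eq_mul]
  rcases le_total x1 x2 with h12 | h21
  · exact NF_convex_aux hnc hna hC hp hp0 x1 t1 x2 t2 l m h12 ht1 ht2 hl' hm' hs
  · have := NF_convex_aux hnc hna hC hp hp0 x2 t2 x1 t1 m l h21 ht2 ht1 hm' hl'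
      (by linarith)
    have e1 : m * x2 + l * x1 = l * x1 + m * x2 := by ring
    have e2 : m * t2 + l * t1 = l * t1 + m * t2 := by ring
    rwa [e1, e2] at this

end Ncvx
end EHelp

open EHelp in
/-- Lemma `fg agree lemma` (i): the form of `nat (nat f + χ_C)` when
`Φ(nat f) ∩ C ≠ ∅` and `nat f` is right-continuous at `ψ̄ = sup C ∈ (0, ∞)`. -/
theorem enat_plus_indicator (f : ℝ → EReal) (hf : KConvex f)
    (hΓ : ⊥ < speedp (Fd f))
    (C : Set ℝ) (hC : Convex ℝ C) (p : ℝ) (hp : IsLUB C p) (hp0 : 0 < p)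
    (hne : (Phi (enat f) ∩ C).Nonempty)
    (hrc : ContinuousWithinAt (enat f) (Set.Ici p) p) :
    (∀ θ : ℝ, θ < p →
      enat (fun x => enat f x + echi C x) θ = enat f θ + echi C θ) ∧
    (∀ θ : ℝ, p ≤ θ →
      enat (fun x => enat f x + echi C x) θ =
        (θ : EReal) * (enat f p * ((p⁻¹ : ℝ) : EReal))) := by
  obtain ⟨ψ0, hψ0Φ, hψ0C⟩ := hne
  have hψ0t : enat f ψ0 ≠ ⊤ := LT.lt.ne hψ0Φ
  have hnc := enat_convex f
  have hna := enat_anti f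
  have hNle := NF_le hnc hp hp0 hψ0C hψ0t hrc
  have hNanti := NF_anti hna hC hp hp0
  have hNconv := NF_convex hnc hna hC hp hp0
  have hle : ∀ θ, enat (fun x => enat f x + echi C x) θ ≤ NF (enat f) C p θ := by
    refine enat_le (NF (enat f) C p) ?_
    intro g hgc hgle hga θ
    by_cases hθ : θ < p
    · rw [NF]
      simp only [if_pos hθ]
      exact hgle θ
    · push_neg at hθ
      have hθpos : 0 < θ := hp0.trans_le hθ
      rw [NF]
      simp only [if_neg (not_lt.2 hθ)]
      have hgp := key_gp hnc hC hp hp0 hψ0C hψ0t hgle hga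
      have hsl := hga (mem_Ioi.2 hp0) (mem_Ioi.2 hθpos) hθ
      simp only at hsl
      calc g θ = ((θ : ℝ) : EReal) * (g θ * ((θ⁻¹ : ℝ) : EReal)) := (mul_mul_inv hθpos).symm
        _ ≤ ((θ : ℝ) : EReal) * (g p * ((p⁻¹ : ℝ) : EReal)) := coe_mul_mono hsl hθpos.le
        _ ≤ ((θ : ℝ) : EReal) * (enat f p * ((p⁻¹ : ℝ) : EReal)) :=
            coe_mul_mono (mul_inv_mono hgp (inv_pos.2 hp0).le) hθpos.le
  have hge : ∀ θ, NF (enat f) C p θ ≤ enat (fun x => enat f x + echi C x) θ :=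
    le_enat hNconv hNle hNanti
  constructor
  · intro θ hθ
    rw [le_antisymm (hle θ) (hge θ), NF]
    simp only [if_pos hθ]
  · intro θ hθ
    rw [le_antisymm (hle θ) (hge θ), NF]
    simp only [if_neg (not_lt.2 hθ)]
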